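/- For any vectors ω₁, ω₂, ω₃, v₁, v₂, v₃ ∈ ℝ³, the following polynomial identity (the dual syzygy) holds: 2·I₁₂₃·Ĩ₁₂₃ = Ĩ₁₁I₂₂I₃₃ + I₁₁Ĩ₂₂I₃₃ + I₁₁I₂₂Ĩ₃₃ − Ĩ₁₁I₂₃² − 2I₁₁I₂₃Ĩ₂₃ + 2Ĩ₁₂I₁₃I₂₃ + 2I₁₂Ĩ₁₃I₂₃ + 2I₁₂I₁₃Ĩ₂₃ − 2I₁₂Ĩ₁₂I₃₃ − I₁₂²Ĩ₃₃ − 2I₁₃Ĩ₁₃I₂₂ − I₁₃²Ĩ₂₂, where I_{ij} = ωᵢ·ω_j, Ĩ_{ij} = ωᵢ·v_j + vᵢ·ω_j, I₁₂₃ = det[ω₁ ω₂ ω₃], and Ĩ₁₂₃ = det[v₁ ω₂ ω₃] + det[ω₁ v₂ ω₃] + det[ω₁ ω₂ v₃]. -/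
import Mathlib


open Matrix

/-- The `3×3` matrix with columns `a`, `b`, `c`. -/
def colMat (a b c : Fin 3 → ℝ) : Matrix (Fin 3) (Fin 3) ℝ :=
  (Matrix.of ![a, b, c])ᵀ

/-- The dual syzygy obtained by dualising `I₁₂₃² = det(I_{ij})`. -/
theorem dual_syzygy (ω₁ ω₂ ω₃ v₁ v₂ v₃ : Fin 3 → ℝ) :
    -- abbreviations
    let I₁₁ := ω₁ ⬝ᵥ ω₁; let I₂₂ := ω₂ ⬝ᵥ ω₂; let I₃₃ := ω₃ ⬝ᵥ ω₃
    let I₁₂ := ω₁ ⬝ᵥ ω₂; let I₁₃ := ω₁ ⬝ᵥ ω₃; let I₂₃ := ω₂ ⬝ᵥ ω₃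
    let J₁₁ := ω₁ ⬝ᵥ v₁ + v₁ ⬝ᵥ ω₁; let J₂₂ := ω₂ ⬝ᵥ v₂ + v₂ ⬝ᵥ ω₂
    let J₃₃ := ω₃ ⬝ᵥ v₃ + v₃ ⬝ᵥ ω₃; let J₁₂ := ω₁ ⬝ᵥ v₂ + v₁ ⬝ᵥ ω₂
    let J₁₃ := ω₁ ⬝ᵥ v₃ + v₁ ⬝ᵥ ω₃; let J₂₃ := ω₂ ⬝ᵥ v₃ + v₂ ⬝ᵥ ω₃
    let I₁₂₃ := (colMat ω₁ ω₂ ω₃).det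
    let J₁₂₃ := (colMat v₁ ω₂ ω₃).det + (colMat ω₁ v₂ ω₃).det + (colMat ω₁ ω₂ v₃).det
    2 * I₁₂₃ * J₁₂₃ =
      J₁₁ * I₂₂ * I₃₃ + I₁₁ * J₂₂ * I₃₃ + I₁₁ * I₂₂ * J₃₃
        - J₁₁ * I₂₃ ^ 2 - 2 * I₁₁ * I₂₃ * J₂₃
        + 2 * J₁₂ * I₁₃ * I₂₃ + 2 * I₁₂ * J₁₃ * I₂₃ + 2 * I₁₂ * I₁₃ * J₂₃
        - 2 * I₁₂ * J₁₂ * I₃₃ - I₁₂ ^ 2 * J₃₃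
        - 2 * I₁₃ * J₁₃ * I₂₂ - I₁₃ ^ 2 * J₂₂ := by
  simp only [dotProduct, Fin.sum_univ_three, colMat, Matrix.det_fin_three,
    Matrix.transpose_apply, Matrix.of_apply, Matrix.cons_val_zero, Matrix.cons_val_one,
    Matrix.head_cons, Matrix.cons_val_two, Matrix.tail_cons]
  ring
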